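/- Let B be symmetric positive semidefinite, A = I + cB² with c > 0, and η ∈ ℝᴺ. Then for any λ ∈ ℝ with λ ≥ 0, the matrix equation (A + λ B η ηᵀ)-type SAV linear system has a unique solution. Precisely: given the scalar equation (1 + (1/6)MΔt θ) s = g where θ = (A⁻¹ B η, η) ≥ 0, M, Δt > 0 and g ∈ ℝ, there is a unique s, and consequently the fully discrete SAV scheme A Φ^{n+1} + (1/6)MΔt (η, Φ^{n+1}) B η = RHS has a unique solution Φ^{n+1} ∈ ℝᴺ for any given right-hand side RHS ∈ ℝᴺ. -/

import Mathlib

open Matrix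

lemma symm_dot {N : ℕ} {B : Matrix (Fin N) (Fin N) ℝ} (hS : Bᵀ = B)
    (x y : Fin N → ℝ) : x ⬝ᵥ (B *ᵥ y) = (B *ᵥ x) ⬝ᵥ y := by
  rw [dotProduct_mulVec, ← mulVec_transpose, hS]

theorem sav_scheme_unique_solvability
    (N : ℕ) (B : Matrix (Fin N) (Fin N) ℝ) (hB : B.PosSemidef)
    (M Δt ε : ℝ) (hM : 0 < M) (hΔt : 0 < Δt) (hε : 0 < ε)
    (A : Matrix (Fin N) (Fin N) ℝ)
    (hA : A = 1 + (2 / 3 * M * Δt * ε ^ 2) • (B * B))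
    (η RHS : Fin N → ℝ) (g : ℝ) :
    (∃! s : ℝ, (1 + 1 / 6 * M * Δt * (η ⬝ᵥ (A⁻¹ *ᵥ (B *ᵥ η)))) * s = g) ∧
      ∃! Φ : Fin N → ℝ, A *ᵥ Φ + (1 / 6 * M * Δt * (η ⬝ᵥ Φ)) • (B *ᵥ η) = RHS := by
  have hBsym : Bᵀ = B := hB.1
  have hBnn : ∀ x : Fin N → ℝ, 0 ≤ x ⬝ᵥ (B *ᵥ x) := by
    intro x
    simpa using hB.dotProduct_mulVec_nonneg x
  set c : ℝ := 2 / 3 * M * Δt * ε ^ 2 with hcdef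
  have hc0 : 0 < c := by positivity
  -- A is positive definite
  have hApd : A.PosDef := by
    rw [hA]
    refine Matrix.PosDef.add_posSemidef Matrix.PosDef.one ?_
    refine Matrix.PosSemidef.of_dotProduct_mulVec_nonneg ?_ ?_
    · have h1 : (B * B).IsHermitian := by
        have := Matrix.posSemidef_conjTranspose_mul_self B
        rw [show Bᴴ = B from hB.1] at this
        exact this.1
      simp [Matrix.IsHermitian, conjTranspose_smul, h1.eq, hBsym]
    · intro x
      have : (c • (B * B)) *ᵥ x = c • (B *ᵥ (B *ᵥ x)) := by
        rw [smul_mulVec, ← mulVec_mulVec]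
      rw [this]
      simp only [star_trivial, dotProduct_smul, smul_eq_mul]
      have := hBnn (B *ᵥ x)
      have h2 : x ⬝ᵥ (B *ᵥ (B *ᵥ x)) = (B *ᵥ x) ⬝ᵥ (B *ᵥ x) := symm_dot hBsym x (B *ᵥ x)
      rw [h2]
      exact mul_nonneg hc0.le (by simpa using dotProduct_star_self_nonneg (B *ᵥ x))
  have hdet : IsUnit A.det := (Matrix.isUnit_iff_isUnit_det A).mp hApd.isUnit
  have hAAi : A * A⁻¹ = 1 := Matrix.mul_nonsing_inv A hdet
  have hAiA : A⁻¹ * A = 1 := Matrix.nonsing_inv_mul A hdet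
  -- commutation
  have hcomm : A * B = B * A := by
    rw [hA]
    simp only [add_mul, mul_add, one_mul, mul_one, smul_mul_assoc, mul_smul_comm, mul_assoc]
  have hcommi : A⁻¹ * B = B * A⁻¹ := by
    calc A⁻¹ * B = A⁻¹ * B * (A * A⁻¹) := by rw [hAAi, mul_one]
    _ = A⁻¹ * (B * A) * A⁻¹ := by simp only [mul_assoc]
    _ = A⁻¹ * (A * B) * A⁻¹ := by rw [hcomm]
    _ = (A⁻¹ * A) * (B * A⁻¹) := by simp only [mul_assoc]
    _ = B * A⁻¹ := by rw [hAiA, one_mul]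
  have hswap : ∀ v : Fin N → ℝ, A⁻¹ *ᵥ (B *ᵥ v) = B *ᵥ (A⁻¹ *ᵥ v) := by
    intro v
    rw [mulVec_mulVec, mulVec_mulVec, hcommi, ← mulVec_mulVec]
  set k : ℝ := 1 / 6 * M * Δt with hkdef
  have hk0 : 0 < k := by positivity
  set θ : ℝ := η ⬝ᵥ (A⁻¹ *ᵥ (B *ᵥ η)) with hθdef
  -- θ is nonnegative
  have hθ0 : 0 ≤ θ := by
    set w : Fin N → ℝ := A⁻¹ *ᵥ η with hw
    have hηw : A *ᵥ w = η := by
      rw [hw, mulVec_mulVec, hAAi, one_mulVec]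
    have h1 : θ = (A *ᵥ w) ⬝ᵥ (B *ᵥ w) := by
      rw [hθdef, hswap, ← hw, hηw]
    have h2 : A *ᵥ w = w + c • (B *ᵥ (B *ᵥ w)) := by
      rw [hA, add_mulVec, one_mulVec, smul_mulVec, ← mulVec_mulVec]
    rw [h1, h2, add_dotProduct, smul_dotProduct]
    have h3 : (B *ᵥ (B *ᵥ w)) ⬝ᵥ (B *ᵥ w) = (B *ᵥ w) ⬝ᵥ (B *ᵥ (B *ᵥ w)) :=
      dotProduct_comm _ _
    rw [smul_eq_mul, h3]
    exact add_nonneg (hBnn w) (mul_nonneg hc0.le (hBnn (B *ᵥ w)))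
  have hcoef : (0:ℝ) < 1 + k * θ := by nlinarith
  constructor
  · refine ⟨g / (1 + k * θ), ?_, ?_⟩
    · field_simp
    · intro y hy
      field_simp at hy ⊢
      linarith [hy]
  · -- the linear system
    set t : ℝ := (η ⬝ᵥ (A⁻¹ *ᵥ RHS)) / (1 + k * θ) with htdef
    have hteq : (1 + k * θ) * t = η ⬝ᵥ (A⁻¹ *ᵥ RHS) := by
      rw [htdef]; field_simp
    refine ⟨A⁻¹ *ᵥ (RHS - (k * t) • (B *ᵥ η)), ?_, ?_⟩
    · beta_reduce
      have hdot : η ⬝ᵥ (A⁻¹ *ᵥ (RHS - (k * t) • (B *ᵥ η))) = t := by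
        rw [mulVec_sub, mulVec_smul, dotProduct_sub, dotProduct_smul, smul_eq_mul, ← hθdef]
        nlinarith [hteq]
      rw [hdot, mulVec_mulVec, hAAi, one_mulVec]
      abel
    · intro Ψ hΨ
      have hΨ2 : Ψ = A⁻¹ *ᵥ (RHS - (k * (η ⬝ᵥ Ψ)) • (B *ᵥ η)) := by
        have : A *ᵥ Ψ = RHS - (k * (η ⬝ᵥ Ψ)) • (B *ᵥ η) := by
          rw [← hΨ]; abel
        rw [← this, mulVec_mulVec, hAiA, one_mulVec]
      have hdotΨ : η ⬝ᵥ Ψ = t := by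
        have h4 : η ⬝ᵥ Ψ = η ⬝ᵥ (A⁻¹ *ᵥ RHS) - k * (η ⬝ᵥ Ψ) * θ := by
          conv_lhs => rw [hΨ2]
          rw [mulVec_sub, mulVec_smul, dotProduct_sub, dotProduct_smul, smul_eq_mul, ← hθdef]
        have h5 : (1 + k * θ) * (η ⬝ᵥ Ψ) = η ⬝ᵥ (A⁻¹ *ᵥ RHS) := by nlinarith [h4]
        have := hteq
        nlinarith [h5, hcoef]
      rw [hΨ2, hdotΨ]
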